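/- In a Euclidean Hurwitz algebra, if u, v are orthonormal vectors orthogonal to 1, and w is a unit vector orthogonal to each of 1, u, v, u·v, then the product of any two distinct elements of {u·w, v·w, (u·v)·w} lies in {±u, ±v, ±(u·v)}; specifically, (u·w)·(v·w) = -(u·v). -/

import Mathlib

theorem stmt_19 {A : Type*} [NormedAddCommGroup A] [InnerProductSpace ℝ A]
    (mul : A →ₗ[ℝ] A →ₗ[ℝ] A) (e : A) (he : ‖e‖ = 1)
    (hul : ∀ x, mul e x = x) (hur : ∀ x, mul x e = x)
    (hmon : ∀ x y, ‖mul x y‖ = ‖x‖ * ‖y‖)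
    (u v w : A) (hu : ‖u‖ = 1) (hv : ‖v‖ = 1) (hw : ‖w‖ = 1)
    (hue : (inner ℝ u e : ℝ) = 0) (hve : (inner ℝ v e : ℝ) = 0)
    (huv : (inner ℝ u v : ℝ) = 0)
    (hwe : (inner ℝ w e : ℝ) = 0) (hwu : (inner ℝ w u : ℝ) = 0)
    (hwv : (inner ℝ w v : ℝ) = 0) (hwuv : (inner ℝ w (mul u v) : ℝ) = 0) :
    (∀ a b : A, a ∈ ({mul u w, mul v w, mul (mul u v) w} : Set A) →
        b ∈ ({mul u w, mul v w, mul (mul u v) w} : Set A) → a ≠ b →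
        mul a b ∈ ({u, -u, v, -v, mul u v, -(mul u v)} : Set A)) ∧
    mul (mul u w) (mul v w) = -(mul u v) := by
  have hsq : ∀ x y : A, ‖mul x y‖ ^ 2 = ‖x‖ ^ 2 * ‖y‖ ^ 2 := fun x y => by
    rw [hmon]; ring
  -- polarization in the first variable
  have hR : ∀ x z y : A, (inner ℝ (mul x y) (mul z y) : ℝ) = inner ℝ x z * ‖y‖ ^ 2 := by
    intro x z y
    have h3 := hsq (x + z) y
    have h2 : mul (x + z) y = mul x y + mul z y := by simp [map_add]
    rw [h2, norm_add_sq_real, norm_add_sq_real] at h3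
    have hx := hsq x y
    have hz := hsq z y
    linear_combination (h3 - hx - hz) / 2
  -- exchange identity
  have hE : ∀ x y z t : A, (inner ℝ (mul x y) (mul z t) : ℝ) + inner ℝ (mul x t) (mul z y)
      = 2 * inner ℝ x z * inner ℝ y t := by
    intro x y z t
    have h3 := hR x z (y + t)
    rw [map_add, map_add, inner_add_left, inner_add_right, inner_add_right,
      norm_add_sq_real] at h3
    have hy := hR x z y
    have ht := hR x z t
    linear_combination h3 - hy - ht
  -- polarization in the second variable
  have hL : ∀ x y t : A, (inner ℝ (mul x y) (mul x t) : ℝ) = ‖x‖ ^ 2 * inner ℝ y t := by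
    intro x y t
    have h := hE x y x t
    have hc : (inner ℝ (mul x t) (mul x y) : ℝ) = inner ℝ (mul x y) (mul x t) :=
      real_inner_comm _ _
    have hn : (inner ℝ x x : ℝ) = ‖x‖ ^ 2 := real_inner_self_eq_norm_sq x
    linear_combination h / 2 - hc / 2 + (inner ℝ y t : ℝ) * hn
  -- adjoint identity
  have hadj : ∀ x y z : A, (inner ℝ (mul x y) z : ℝ)
      = 2 * inner ℝ x e * inner ℝ y z - inner ℝ y (mul x z) := by
    intro x y z
    have h := hE x y e z
    rw [hul, hul] at h
    have hc : (inner ℝ (mul x z) y : ℝ) = inner ℝ y (mul x z) := real_inner_comm _ _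
    linear_combination h - hc
  -- products of imaginary orthogonal elements are imaginary
  have hprod_e : ∀ x y : A, (inner ℝ x e : ℝ) = 0 → (inner ℝ x y : ℝ) = 0 →
      (inner ℝ (mul x y) e : ℝ) = 0 := by
    intro x y hx hxy
    have h := hadj x y e
    rw [hur] at h
    have hyx : (inner ℝ y x : ℝ) = 0 := by rw [real_inner_comm]; exact hxy
    rw [h, hx, hyx]; ring
  -- flip law
  have hflip : ∀ a b : A, (inner ℝ a e : ℝ) = 0 → (inner ℝ b e : ℝ) = 0 →
      (inner ℝ a b : ℝ) = 0 → mul a b = - mul b a := by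
    intro a b ha hb hab
    have key : ∀ y : A, (inner ℝ (mul a b + mul b a) y : ℝ) = 0 := by
      intro y
      rw [inner_add_left, hadj a b y, hadj b a y]
      have h := hE b e a y
      rw [hur, hur] at h
      have hc1 : (inner ℝ (mul b y) a : ℝ) = inner ℝ a (mul b y) := real_inner_comm _ _
      have hba : (inner ℝ b a : ℝ) = 0 := by rw [real_inner_comm]; exact hab
      linear_combination -h + hc1 + 2 * (inner ℝ b y : ℝ) * ha + 2 * (inner ℝ a y : ℝ) * hb
        - 2 * (inner ℝ e y : ℝ) * hba
    have h0 := key (mul a b + mul b a)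
    have hz : mul a b + mul b a = 0 := by rwa [inner_self_eq_zero] at h0
    exact eq_neg_of_add_eq_zero_left hz
  -- linearized left alternative law
  have hleft2 : ∀ a b z : A, (inner ℝ a e : ℝ) = 0 → (inner ℝ b e : ℝ) = 0 →
      (inner ℝ a b : ℝ) = 0 → mul a (mul b z) = - mul b (mul a z) := by
    intro a b z ha hb hab
    have key : ∀ y : A, (inner ℝ (mul a (mul b z) + mul b (mul a z)) y : ℝ) = 0 := by
      intro y
      rw [inner_add_left, hadj a (mul b z) y, hadj b (mul a z) y]
      have h := hE a z b y
      have hc : (inner ℝ (mul b z) (mul a y) : ℝ) = inner ℝ (mul a y) (mul b z) :=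
        real_inner_comm _ _
      linear_combination -h - hc + 2 * (inner ℝ (mul b z) y : ℝ) * ha
        + 2 * (inner ℝ (mul a z) y : ℝ) * hb - 2 * (inner ℝ z y : ℝ) * hab
    have h0 := key (mul a (mul b z) + mul b (mul a z))
    have hz : mul a (mul b z) + mul b (mul a z) = 0 := by rwa [inner_self_eq_zero] at h0
    exact eq_neg_of_add_eq_zero_left hz
  -- square law for imaginary units
  have hsqa : ∀ a z : A, (inner ℝ a e : ℝ) = 0 → ‖a‖ = 1 → mul a (mul a z) = -z := by
    intro a z ha hna
    have key : ∀ y : A, (inner ℝ (mul a (mul a z) + z) y : ℝ) = 0 := by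
      intro y
      rw [inner_add_left, hadj a (mul a z) y, hL a z y, ha, hna]
      ring
    have h0 := key (mul a (mul a z) + z)
    have hz : mul a (mul a z) + z = 0 := by rwa [inner_self_eq_zero] at h0
    exact eq_neg_of_add_eq_zero_left hz
  -- basic inner ℝ products
  have hvw : (inner ℝ v w : ℝ) = 0 := by rw [real_inner_comm]; exact hwv
  have huw : (inner ℝ u w : ℝ) = 0 := by rw [real_inner_comm]; exact hwu
  have hev : (inner ℝ e v : ℝ) = 0 := by rw [real_inner_comm]; exact hve
  have heu : (inner ℝ e u : ℝ) = 0 := by rw [real_inner_comm]; exact hue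
  have huvw : (inner ℝ (mul u v) w : ℝ) = 0 := by rw [real_inner_comm]; exact hwuv
  -- imaginary parts of products
  have heuv : (inner ℝ (mul u v) e : ℝ) = 0 := hprod_e u v hue huv
  have heuw : (inner ℝ (mul u w) e : ℝ) = 0 := hprod_e u w hue huw
  have hevw : (inner ℝ (mul v w) e : ℝ) = 0 := hprod_e v w hve hvw
  have heuvw : (inner ℝ (mul (mul u v) w) e : ℝ) = 0 := hprod_e (mul u v) w heuv huvw
  -- u, v orthogonal to uv
  have huuv : (inner ℝ u (mul u v) : ℝ) = 0 := by
    have h := hL u e v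
    rw [hur, hev] at h
    simpa using h
  have hvuv : (inner ℝ v (mul u v) : ℝ) = 0 := by
    have h := hR e u v
    rw [hul, heu] at h
    simpa using h
  have huvv : (inner ℝ (mul u v) v : ℝ) = 0 := by rw [real_inner_comm]; exact hvuv
  -- norms of products
  have nuv : ‖mul u v‖ = 1 := by rw [hmon, hu, hv]; norm_num
  have nuw : ‖mul u w‖ = 1 := by rw [hmon, hu, hw]; norm_num
  have nvw : ‖mul v w‖ = 1 := by rw [hmon, hv, hw]; norm_num
  have nuvw : ‖mul (mul u v) w‖ = 1 := by rw [hmon, nuv, hw]; norm_num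
  have hselfuw : (inner ℝ (mul u w) (mul u w) : ℝ) = 1 := by
    rw [real_inner_self_eq_norm_sq, nuw]; norm_num
  -- vector computations
  have c2 : mul u v = - mul v u := hflip u v hue hve huv
  have c6 : mul w u = - mul u w := hflip w u hwe hue hwu
  have c4 : mul (mul u v) w = - mul w (mul u v) := hflip (mul u v) w heuv hwe huvw
  have c3 : mul v (mul u v) = u := by
    rw [c2, map_neg, hsqa v u hve hv, neg_neg]
  have cA : mul v (mul (mul u v) w) = -(mul u w) := by
    rw [c4, map_neg, hleft2 v w (mul u v) hve hwe hvw, c3, neg_neg, c6]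
  have cB : mul (mul u v) (mul v w) = mul u w := by
    rw [hleft2 (mul u v) v w heuv hve huvv, cA, neg_neg]
  have cC : mul u (mul v w) = - mul v (mul u w) := hleft2 u v w hue hve huv
  -- scalar computations
  have S12 : (inner ℝ (mul (mul u w) (mul v w)) (mul u v) : ℝ) = -1 := by
    have h := hE (mul u w) (mul v w) (mul u v) e
    rw [hur, hur, cB] at h
    linear_combination h - hselfuw + 2 * (inner ℝ (mul u w) (mul u v) : ℝ) * hevw
  have S13 : (inner ℝ (mul (mul u w) (mul (mul u v) w)) v : ℝ) = 1 := by
    have h := hE (mul u w) (mul (mul u v) w) v e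
    rw [hur, hur, cA, inner_neg_right] at h
    linear_combination h + hselfuw + 2 * (inner ℝ (mul u w) v : ℝ) * heuvw
  have hX : (inner ℝ (mul (mul u v) w) (mul v (mul u w)) : ℝ) = 1 := by
    rw [real_inner_comm, hadj v (mul u w) (mul (mul u v) w), cA, inner_neg_right,
      hve, hselfuw]
    ring
  have S32 : (inner ℝ (mul (mul (mul u v) w) (mul v w)) u : ℝ) = 1 := by
    have h := hE (mul (mul u v) w) (mul v w) u e
    rw [hur, hur, cC, inner_neg_right] at h
    linear_combination h + hX + 2 * (inner ℝ (mul (mul u v) w) u : ℝ) * hevw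
  -- conclusion from norms and inner ℝ products
  have heq1 : ∀ p t : A, ‖p‖ = 1 → ‖t‖ = 1 → (inner ℝ p t : ℝ) = 1 → p = t := by
    intro p t hp ht hpt
    have h : ‖p - t‖ ^ 2 = 0 := by
      rw [norm_sub_sq_real, hp, ht, hpt]; ring
    have h3 : ‖p - t‖ = 0 := sq_eq_zero_iff.mp h
    have h2 : p - t = 0 := norm_eq_zero.mp h3
    exact sub_eq_zero.mp h2
  have E12 : mul (mul u w) (mul v w) = -(mul u v) := by
    apply heq1 _ _ (by rw [hmon, nuw, nvw]; norm_num) (by rw [norm_neg]; exact nuv)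
    rw [inner_neg_right, S12]; norm_num
  have E13 : mul (mul u w) (mul (mul u v) w) = v :=
    heq1 _ _ (by rw [hmon, nuw, nuvw]; norm_num) hv S13
  have E32 : mul (mul (mul u v) w) (mul v w) = u :=
    heq1 _ _ (by rw [hmon, nuvw, nvw]; norm_num) hu S32
  -- orthogonality among the three products
  have o12 : (inner ℝ (mul v w) (mul u w) : ℝ) = 0 := by
    rw [hR, real_inner_comm, huv]; ring
  have o13 : (inner ℝ (mul (mul u v) w) (mul u w) : ℝ) = 0 := by
    rw [hR, real_inner_comm, huuv]; ring
  have o23 : (inner ℝ (mul v w) (mul (mul u v) w) : ℝ) = 0 := by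
    rw [hR, hvuv]; ring
  have E21 : mul (mul v w) (mul u w) = mul u v := by
    rw [hflip (mul v w) (mul u w) hevw heuw o12, E12, neg_neg]
  have E31 : mul (mul (mul u v) w) (mul u w) = -v := by
    rw [hflip (mul (mul u v) w) (mul u w) heuvw heuw o13, E13]
  have E23 : mul (mul v w) (mul (mul u v) w) = -u := by
    rw [hflip (mul v w) (mul (mul u v) w) hevw heuvw o23, E32]
  constructor
  · intro a b ha hb hab
    simp only [Set.mem_insert_iff, Set.mem_singleton_iff] at ha hb ⊢
    rcases ha with rfl | rfl | rfl <;> rcases hb with rfl | rfl | rfl <;>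
      first
      | exact absurd rfl hab
      | (rw [E12]; tauto)
      | (rw [E21]; tauto)
      | (rw [E13]; tauto)
      | (rw [E31]; tauto)
      | (rw [E32]; tauto)
      | (rw [E23]; tauto)
  · exact E12
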